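/- For MDP-like lifting of metrics via weight functions: if λ ∈ μ⊗ν is a weight function coupling distributions μ and ν, and d_n is the n-th iterate of the state-based metric functional, then d_AP(μ,ν) ≤ d_n(μ,ν) for all n ≥ 1, where d_n(μ,ν) = min_{λ∈μ⊗ν} Σ_{s,t} λ(s,t)·d_n(s,t). -/
import Mathlib


open Finset

structure ProbDist (S : Type) [Fintype S] where
  f : S → ℝ
  nonneg : ∀ s, 0 ≤ f s
  sum_one : ∑ s, f s = 1

/-- Probability assigned by a distribution to a set of states. -/
noncomputable def ProbDist.pr {S : Type} [Fintype S] (μ : ProbDist S) (C : Set S) : ℝ :=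
  ∑ s, C.indicator μ.f s

/-- μ(A) := Σ_{s : L s = A} μ(s). -/
noncomputable def pOf {S AP : Type} [Fintype S] (L : S → Finset AP) (μ : ProbDist S)
    (A : Finset AP) : ℝ :=
  μ.pr {s | L s = A}

/-- d_AP(μ,ν) := (1/2) Σ_{A ⊆ AP} |μ(A) − ν(A)|. -/
noncomputable def dAP {S AP : Type} [Fintype S] [Fintype AP] [DecidableEq AP]
    (L : S → Finset AP) (μ ν : ProbDist S) : ℝ :=
  (1 / 2) * ∑ A : Finset AP, |pOf L μ A - pOf L ν A|

/-- A (Segala) probabilistic automaton, image-finite. -/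
structure PA (S Act AP : Type) [Fintype S] where
  trans : S → Act → ProbDist S → Prop
  L : S → Finset AP
  imageFinite : ∀ s a, {μ | trans s a μ}.Finite

def PA.InputEnabled {S Act AP : Type} [Fintype S] (M : PA S Act AP) : Prop :=
  ∀ s a, ∃ μ, M.trans s a μ

noncomputable def PA.probOf {S Act AP : Type} [Fintype S] (M : PA S Act AP)
    (μ : ProbDist S) (A : Finset AP) : ℝ := pOf M.L μ A

/-- Combined transition s --a-->_P μ : μ is a convex combination of one-step successors. -/
def Combined {S Act AP : Type} [Fintype S] (M : PA S Act AP) (s : S) (a : Act)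
    (μ : ProbDist S) : Prop :=
  ∃ (n : ℕ) (p : Fin n → ℝ) (ν : Fin n → ProbDist S),
    (∀ i, 0 ≤ p i) ∧ (∑ i, p i = 1) ∧ (∀ i, M.trans s a (ν i)) ∧
    (∀ t, μ.f t = ∑ i, p i * (ν i).f t)

/-- Lifted transition μ --a--> μ' between distributions. -/
def Lifted {S Act AP : Type} [Fintype S] (M : PA S Act AP) (μ : ProbDist S) (a : Act)
    (μ' : ProbDist S) : Prop :=
  ∃ k : S → ProbDist S, (∀ s, 0 < μ.f s → Combined M s a (k s)) ∧
    (∀ t, μ'.f t = ∑ s, μ.f s * (k s).f t)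

/-- ProbDist S carries the topology inherited from ℝ^{|S|}. -/
noncomputable instance {S : Type} [Fintype S] : TopologicalSpace (ProbDist S) :=
  TopologicalSpace.induced (fun μ : ProbDist S => μ.f) inferInstance

/-- Weight functions coupling μ and ν (λ ∈ μ⊗ν). -/
def IsWeight {S : Type} [Fintype S] (μ ν : ProbDist S) (lam : S → S → ℝ) : Prop :=
  (∀ s t, 0 ≤ lam s t) ∧ (∀ t, ∑ s, lam s t = ν.f t) ∧ (∀ s, ∑ t, lam s t = μ.f s)

/-- Lifting of a metric on states to distributions via optimal couplings. -/
noncomputable def liftD {S : Type} [Fintype S] (d : S → S → ℝ) (μ ν : ProbDist S) : ℝ :=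
  sInf {x | ∃ lam, IsWeight μ ν lam ∧ x = ∑ s, ∑ t, lam s t * d s t}

/-- The state-based (game) metric functional f. -/
noncomputable def ff {S Act AP : Type} [Fintype S] [Fintype AP] [DecidableEq AP]
    (M : PA S Act AP) (γ : ℝ) (d : S → S → ℝ) (s t : S) : ℝ :=
  max (if M.L s = M.L t then 0 else 1)
    (⨆ a : Act,
      max (⨆ μ ∈ {x | Combined M s a x}, ⨅ ν ∈ {x | Combined M t a x}, γ * liftD d μ ν)
          (⨆ ν ∈ {x | Combined M t a x}, ⨅ μ ∈ {x | Combined M s a x}, γ * liftD d μ ν))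

lemma dAP_le_coupling {S AP : Type} [Fintype S] [Fintype AP] [DecidableEq AP]
    (L : S → Finset AP) (μ ν : ProbDist S) (lam : S → S → ℝ)
    (h : IsWeight μ ν lam) :
    dAP L μ ν ≤ ∑ s, ∑ t, lam s t * (if L s = L t then (0:ℝ) else 1) := by
  obtain ⟨hnn, hcol, hrow⟩ := h
  have habs : ∀ A : Finset AP, |pOf L μ A - pOf L ν A|
      ≤ ∑ s, ∑ t, lam s t *
        |(if L s = A then (1:ℝ) else 0) - (if L t = A then (1:ℝ) else 0)| := by
    intro A
    have hμ : pOf L μ A = ∑ s, ∑ t, lam s t * (if L s = A then (1:ℝ) else 0) := by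
      have h1 : pOf L μ A = ∑ s, μ.f s * (if L s = A then (1:ℝ) else 0) := by
        simp [pOf, ProbDist.pr, Set.indicator_apply, Set.mem_setOf_eq, mul_ite,
          mul_one, mul_zero]
      rw [h1]
      refine Finset.sum_congr rfl fun s _ => ?_
      rw [← hrow s, Finset.sum_mul]
    have hν : pOf L ν A = ∑ s, ∑ t, lam s t * (if L t = A then (1:ℝ) else 0) := by
      have h1 : pOf L ν A = ∑ t, ν.f t * (if L t = A then (1:ℝ) else 0) := by
        simp [pOf, ProbDist.pr, Set.indicator_apply, Set.mem_setOf_eq, mul_ite,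
          mul_one, mul_zero]
      rw [h1, Finset.sum_comm]
      refine Finset.sum_congr rfl fun t _ => ?_
      rw [← hcol t, Finset.sum_mul]
    rw [hμ, hν, ← Finset.sum_sub_distrib]
    calc |∑ s, (∑ t, lam s t * (if L s = A then (1:ℝ) else 0)
            - ∑ t, lam s t * (if L t = A then (1:ℝ) else 0))|
        ≤ ∑ s, |∑ t, lam s t * (if L s = A then (1:ℝ) else 0)
            - ∑ t, lam s t * (if L t = A then (1:ℝ) else 0)| :=
          Finset.abs_sum_le_sum_abs _ _
      _ ≤ ∑ s, ∑ t, lam s t *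
            |(if L s = A then (1:ℝ) else 0) - (if L t = A then (1:ℝ) else 0)| := by
          refine Finset.sum_le_sum fun s _ => ?_
          rw [← Finset.sum_sub_distrib]
          refine le_trans (Finset.abs_sum_le_sum_abs _ _) ?_
          refine Finset.sum_le_sum fun t _ => ?_
          rw [← mul_sub, abs_mul, abs_of_nonneg (hnn s t)]
  have hsumA : ∀ s t : S, ∑ A : Finset AP,
      |(if L s = A then (1:ℝ) else 0) - (if L t = A then (1:ℝ) else 0)|
      = 2 * (if L s = L t then (0:ℝ) else 1) := by
    intro s t
    by_cases hst : L s = L t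
    · simp [hst]
    · have hterm : ∀ A : Finset AP,
          |(if L s = A then (1:ℝ) else 0) - (if L t = A then (1:ℝ) else 0)|
          = (if L s = A then (1:ℝ) else 0) + (if L t = A then (1:ℝ) else 0) := by
        intro A
        by_cases h1 : L s = A <;> by_cases h2 : L t = A
        · exact absurd (h1.trans h2.symm) hst
        · simp [h1, h2]
        · simp [h1, h2]
        · simp [h1, h2]
      rw [Finset.sum_congr rfl (fun A _ => hterm A), Finset.sum_add_distrib]
      simp [hst, Finset.sum_ite_eq]
      norm_num
  have : dAP L μ ν ≤ (1/2) * ∑ s, ∑ t, lam s t *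
      (2 * (if L s = L t then (0:ℝ) else 1)) := by
    unfold dAP
    have h2 : ∑ A : Finset AP, |pOf L μ A - pOf L ν A|
        ≤ ∑ s, ∑ t, lam s t * (2 * (if L s = L t then (0:ℝ) else 1)) := by
      calc ∑ A : Finset AP, |pOf L μ A - pOf L ν A|
          ≤ ∑ A : Finset AP, ∑ s, ∑ t, lam s t *
              |(if L s = A then (1:ℝ) else 0) - (if L t = A then (1:ℝ) else 0)| :=
            Finset.sum_le_sum fun A _ => habs A
        _ = ∑ s, ∑ t, lam s t * (2 * (if L s = L t then (0:ℝ) else 1)) := by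
            rw [Finset.sum_comm]
            refine Finset.sum_congr rfl fun s _ => ?_
            rw [Finset.sum_comm]
            refine Finset.sum_congr rfl fun t _ => ?_
            rw [← Finset.mul_sum, hsumA]
    linarith
  refine le_trans this (le_of_eq ?_)
  rw [Finset.mul_sum]
  refine Finset.sum_congr rfl fun s _ => ?_
  rw [Finset.mul_sum]
  refine Finset.sum_congr rfl fun t _ => ?_
  ring

theorem stmt18 {S Act AP : Type} [Fintype S] [Fintype Act] [Fintype AP] [DecidableEq AP]
    (M : PA S Act AP) (hM : M.InputEnabled) (γ : ℝ) (hγ0 : 0 < γ) (hγ1 : γ ≤ 1)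
    (n : ℕ) (hn : 1 ≤ n) (μ ν : ProbDist S) :
    dAP M.L μ ν ≤ liftD ((ff M γ)^[n] (fun _ _ => (0 : ℝ))) μ ν := by
  obtain ⟨m, rfl⟩ := Nat.exists_eq_add_of_le hn
  have hd : ∀ s t, (if M.L s = M.L t then (0:ℝ) else 1)
      ≤ (ff M γ)^[1 + m] (fun _ _ => (0:ℝ)) s t := by
    intro s t
    rw [Nat.add_comm, Function.iterate_succ_apply']
    exact le_max_left _ _
  refine le_csInf ⟨_, ⟨fun s t => μ.f s * ν.f t,
    ⟨fun s t => mul_nonneg (μ.nonneg s) (ν.nonneg t),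
     fun t => by rw [← Finset.sum_mul, μ.sum_one, one_mul],
     fun s => by rw [← Finset.mul_sum, ν.sum_one, mul_one]⟩, rfl⟩⟩ ?_
  rintro x ⟨lam, hw, rfl⟩
  refine le_trans (dAP_le_coupling M.L μ ν lam hw) ?_
  refine Finset.sum_le_sum fun s _ => Finset.sum_le_sum fun t _ => ?_
  exact mul_le_mul_of_nonneg_left (hd s t) (hw.1 s t)
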